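/- Let ω ∈ ℝ³ with θ := ‖ω‖ > 0, and let ω̂ denote its hat matrix. Then the matrix exponential satisfies Rodrigues' formula: exp(ω̂) = I + (sin θ / θ)·ω̂ + ((1 − cos θ)/θ²)·ω̂². -/

import Mathlib

open Matrix
open Nat

/-- The hat map `ℝ³ → 𝔰𝔬(3)`, sending `ω` to the skew-symmetric matrix `ω̂`
with `ω̂ v = ω × v`. -/
def hat (ω : EuclideanSpace ℝ (Fin 3)) : Matrix (Fin 3) (Fin 3) ℝ :=
  !![0, -ω 2, ω 1; ω 2, 0, -ω 0; -ω 1, ω 0, 0]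

lemma hat_norm_sq (ω : EuclideanSpace ℝ (Fin 3)) :
    ‖ω‖ ^ 2 = ω 0 ^ 2 + ω 1 ^ 2 + ω 2 ^ 2 := by
  rw [EuclideanSpace.norm_eq, Real.sq_sqrt (by positivity)]
  simp [Fin.sum_univ_three, Real.norm_eq_abs, sq_abs]

lemma hat_cube (ω : EuclideanSpace ℝ (Fin 3)) :
    hat ω ^ 3 = (-(‖ω‖ ^ 2)) • hat ω := by
  rw [hat_norm_sq]
  ext i j
  fin_cases i <;> fin_cases j <;>
    simp [hat, pow_succ, Matrix.mul_apply, Fin.sum_univ_three] <;> ring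

lemma hat_pow_odd (ω : EuclideanSpace ℝ (Fin 3)) (k : ℕ) :
    hat ω ^ (2 * k + 1) = ((-1 : ℝ) ^ k * ‖ω‖ ^ (2 * k)) • hat ω := by
  induction k with
  | zero => simp
  | succ k ih =>
    have h1 : hat ω ^ (2 * (k + 1) + 1) = hat ω ^ (2 * k + 1) * hat ω ^ 2 := by
      rw [← pow_add]; ring_nf
    have h2 : hat ω * hat ω ^ 2 = hat ω ^ 3 := (pow_succ' _ 2).symm
    rw [h1, ih, Matrix.smul_mul, h2, hat_cube, smul_smul]
    congr 1
    ring

lemma hat_pow_even (ω : EuclideanSpace ℝ (Fin 3)) (k : ℕ) :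
    hat ω ^ (2 * k + 2) = ((-1 : ℝ) ^ k * ‖ω‖ ^ (2 * k)) • (hat ω * hat ω) := by
  have : hat ω ^ (2 * k + 2) = hat ω ^ (2 * k + 1) * hat ω := by
    rw [← pow_succ]
  rw [this, hat_pow_odd, Matrix.smul_mul]

/-- Rodrigues' formula: for `ω ∈ ℝ³` with `θ = ‖ω‖ > 0`,
`exp(ω̂) = I + (sin θ/θ)·ω̂ + ((1 − cos θ)/θ²)·ω̂²`. -/
theorem rodrigues_formula (ω : EuclideanSpace ℝ (Fin 3)) (hω : 0 < ‖ω‖) :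
    NormedSpace.exp (hat ω) =
      1 + (Real.sin ‖ω‖ / ‖ω‖) • hat ω +
        ((1 - Real.cos ‖ω‖) / ‖ω‖ ^ 2) • (hat ω * hat ω) := by
  set θ := ‖ω‖ with hθ
  have hθ0 : θ ≠ 0 := ne_of_gt hω
  set A := hat ω with hA
  set f : ℕ → Matrix (Fin 3) (Fin 3) ℝ := fun n => ((n.factorial : ℝ))⁻¹ • A ^ n with hf
  -- sin series, divided by θ
  have hsin : HasSum (fun k : ℕ => ((-1 : ℝ) ^ k * θ ^ (2 * k) / (2 * k + 1)!) • A)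
      ((Real.sin θ / θ) • A) := by
    have h := ((Real.hasSum_sin θ).div_const θ).smul_const (M := Matrix (Fin 3) (Fin 3) ℝ) A
    convert h using 2 with k
    congr 1
    field_simp
    ring
  -- (1 - cos) series, divided by θ²
  have hcos : HasSum (fun k : ℕ => ((-1 : ℝ) ^ k * θ ^ (2 * k) / (2 * k + 2)!) • (A * A))
      (((1 - Real.cos θ) / θ ^ 2) • (A * A)) := by
    have h0 := Real.hasSum_cos θ
    have h1 : HasSum (fun k : ℕ => (-1 : ℝ) ^ (k + 1) * θ ^ (2 * (k + 1)) / (2 * (k + 1))!)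
        (Real.cos θ - 1) := by
      refine (hasSum_nat_add_iff
        (f := fun n : ℕ => (-1 : ℝ) ^ n * θ ^ (2 * n) / (2 * n)!) 1).mpr ?_
      convert h0 using 1
      · rfl
      · norm_num [Finset.sum_range_one]
    have h2 : HasSum (fun k : ℕ => (-1 : ℝ) ^ k * θ ^ (2 * k + 2) / (2 * k + 2)!)
        (1 - Real.cos θ) := by
      have hn := h1.neg
      convert hn using 1
      · rfl
      · funext k
        have e : 2 * (k + 1) = 2 * k + 2 := by ring
        rw [e]
        ring
      · ring
    have h3 := (h2.div_const (θ ^ 2)).smul_const (M := Matrix (Fin 3) (Fin 3) ℝ) (A * A)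
    convert h3 using 2 with k
    congr 1
    rw [pow_add]
    field_simp
  -- even/odd assembly for the shifted series
  have heven : HasSum (fun k : ℕ => f (2 * k + 1)) ((Real.sin θ / θ) • A) := by
    convert hsin using 2 with k
    rw [hf]
    simp only
    rw [hat_pow_odd, smul_smul]
    congr 1
    rw [div_eq_mul_inv]
    ring
  have hodd : HasSum (fun k : ℕ => f (2 * k + 2)) (((1 - Real.cos θ) / θ ^ 2) • (A * A)) := by
    convert hcos using 2 with k
    rw [hf]
    simp only
    rw [hat_pow_even, smul_smul]
    congr 1
    rw [div_eq_mul_inv]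
    ring
  have hshift : HasSum (fun n : ℕ => f (n + 1))
      ((Real.sin θ / θ) • A + ((1 - Real.cos θ) / θ ^ 2) • (A * A)) := by
    exact HasSum.even_add_odd heven hodd
  have hfull : HasSum f
      (1 + (Real.sin θ / θ) • A + ((1 - Real.cos θ) / θ ^ 2) • (A * A)) := by
    have := (hasSum_nat_add_iff (f := f) 1).mp hshift
    convert this using 1
    · rfl
    have hf0 : f 0 = 1 := by simp [hf]
    simp [hf0]
    abel
  rw [NormedSpace.exp_eq_tsum ℝ]
  exact hfull.tsum_eq
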